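/- Let n ≥ 1, let A = ℤ/2nℤ, and let Gₙ be the wreath product A ≀ Sₙ, realized on the set Sₙ × Aⁿ with multiplication (π, u)(π', v) = (ππ', π'·u + v), where the action of a permutation σ on a vector u ∈ Aⁿ is (σ·u)ᵢ = u_{σ(i)}. Let u = (1, 2, …, n) and v = (n, n−1, …, 1) (coordinates taken modulo 2n). Then the three subgroups H₁ = {(π, 0) : π ∈ Sₙ}, H₂ = {(π, π·u − u) : π ∈ Sₙ}, and H₃ = {(π, π·v − v) : π ∈ Sₙ}, each of order n!, satisfy the triple product property; hence Gₙ, a group of order n!·(2n)ⁿ, realizes ⟨n!, n!, n!⟩. -/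

import Mathlib

/-- The right quotient set `Q(S) = {s₁s₂⁻¹ : s₁, s₂ ∈ S}` of a subset of a group. -/
def rightQuotient {G : Type*} [Group G] (S : Set G) : Set G :=
  {g | ∃ s₁ ∈ S, ∃ s₂ ∈ S, g = s₁ * s₂⁻¹}

/-- Subsets `S₁, S₂, S₃` of a group satisfy the triple product property if whenever
`qᵢ ∈ Q(Sᵢ)` and `q₁q₂q₃ = 1`, we have `q₁ = q₂ = q₃ = 1`. -/
def TPP {G : Type*} [Group G] (S₁ S₂ S₃ : Set G) : Prop :=
  ∀ q₁ ∈ rightQuotient S₁, ∀ q₂ ∈ rightQuotient S₂, ∀ q₃ ∈ rightQuotient S₃,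
    q₁ * q₂ * q₃ = 1 → q₁ = 1 ∧ q₂ = 1 ∧ q₃ = 1

/-- A group `G` realizes `⟨n₁, n₂, n₃⟩` if there are finite subsets `Sᵢ ⊆ G` with
`|Sᵢ| = nᵢ` satisfying the triple product property. -/
def Realizes (G : Type*) [Group G] (n₁ n₂ n₃ : ℕ) : Prop :=
  ∃ S₁ S₂ S₃ : Set G, S₁.Finite ∧ S₂.Finite ∧ S₃.Finite ∧
    S₁.ncard = n₁ ∧ S₂.ncard = n₂ ∧ S₃.ncard = n₃ ∧ TPP S₁ S₂ S₃

section Wreath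

variable {n : ℕ}

/-- The underlying set of the wreath product `(ℤ/2nℤ) ≀ Sₙ`. -/
abbrev Wr (n : ℕ) := Equiv.Perm (Fin n) × (Fin n → ZMod (2 * n))

/-- Multiplication `(π, u)(π', v) = (ππ', π'·u + v)`, where `(σ·u)ᵢ = u_{σ(i)}`. -/
def wMul (p q : Wr n) : Wr n := (p.1 * q.1, p.2 ∘ ⇑q.1 + q.2)

/-- Inversion for `wMul`. -/
def wInv (p : Wr n) : Wr n := (p.1⁻¹, -(p.2 ∘ ⇑p.1⁻¹))

lemma wMul_assoc (p q r : Wr n) : wMul (wMul p q) r = wMul p (wMul q r) := by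
  simp only [wMul, Prod.mk.injEq]
  refine ⟨mul_assoc _ _ _, ?_⟩
  funext i
  simp [Equiv.Perm.mul_apply, add_assoc]

lemma one_wMul (p : Wr n) : wMul (1, 0) p = p := by
  simp only [wMul, one_mul]
  ext <;> simp

lemma wMul_one (p : Wr n) : wMul p (1, 0) = p := by
  simp only [wMul, mul_one]
  ext <;> simp

lemma wInv_wMul (p : Wr n) : wMul (wInv p) p = (1, 0) := by
  simp only [wMul, wInv, inv_mul_cancel, Prod.mk.injEq, true_and]
  funext i
  simp

/-- The wreath product group `(ℤ/2nℤ) ≀ Sₙ` realized on `Sₙ × (ℤ/2nℤ)ⁿ` with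
multiplication `(π, u)(π', v) = (ππ', π'·u + v)`. -/
def wrGroup (n : ℕ) : Group (Wr n) where
  mul := wMul
  one := (1, 0)
  inv := wInv
  div p q := wMul p (wInv q)
  div_eq_mul_inv _ _ := rfl
  npow := @npowRec _ ⟨(1, 0)⟩ ⟨wMul⟩
  npow_zero _ := rfl
  npow_succ _ _ := rfl
  mul_assoc := wMul_assoc
  one_mul := one_wMul
  mul_one := wMul_one
  inv_mul_cancel := wInv_wMul

/-- The vector `u = (1, 2, …, n)` of the construction. -/
def wu (n : ℕ) : Fin n → ZMod (2 * n) := fun i => ((i : ℕ) + 1 : ℕ)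

/-- The vector `v = (n, n−1, …, 1)` of the construction. -/
def wv (n : ℕ) : Fin n → ZMod (2 * n) := fun i => ((n - (i : ℕ) : ℕ) : ZMod (2 * n))

end Wreath

section Aux

variable {n : ℕ}

lemma hset_ncard (f : Equiv.Perm (Fin n) → (Fin n → ZMod (2 * n))) :
    {p : Wr n | ∃ π : Equiv.Perm (Fin n), p = (π, f π)}.ncard = Nat.factorial n := by
  have hinj : Function.Injective (fun π : Equiv.Perm (Fin n) => ((π, f π) : Wr n)) := by
    intro x y hxy
    exact congrArg Prod.fst hxy
  have hr : {p : Wr n | ∃ π : Equiv.Perm (Fin n), p = (π, f π)}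
      = Set.range (fun π : Equiv.Perm (Fin n) => ((π, f π) : Wr n)) := by
    ext p; simp [Set.mem_range, eq_comm]
  rw [hr, ← Set.image_univ, Set.ncard_image_of_injective _ hinj, Set.ncard_univ,
    Nat.card_eq_fintype_card]
  simp [Fintype.card_perm]

/-- The subgroup `{(π, w∘π − w)}` of the wreath product. -/
def Hsub (n : ℕ) (w : Fin n → ZMod (2 * n)) : @Subgroup (Wr n) (wrGroup n) :=
  @Subgroup.mk (Wr n) (wrGroup n)
    (@Submonoid.mk (Wr n)
      (@Monoid.toMulOneClass _ (@DivInvMonoid.toMonoid _ (@Group.toDivInvMonoid _ (wrGroup n))))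
      (@Subsemigroup.mk (Wr n)
        (@MulOne.toMul _ <| @MulOneClass.toMulOne _ (@Monoid.toMulOneClass _ (@DivInvMonoid.toMonoid _
          (@Group.toDivInvMonoid _ (wrGroup n)))))
        {p : Wr n | ∃ π : Equiv.Perm (Fin n), p = (π, w ∘ ⇑π - w)}
        (by
          rintro p q ⟨π, rfl⟩ ⟨π', rfl⟩
          show ∃ π'' : Equiv.Perm (Fin n),
            wMul (π, w ∘ ⇑π - w) (π', w ∘ ⇑π' - w) = (π'', w ∘ ⇑π'' - w)
          refine ⟨π * π', ?_⟩
          simp only [wMul]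
          refine Prod.ext rfl ?_
          funext i
          simp [Equiv.Perm.mul_apply]))
      (by
        show ∃ π : Equiv.Perm (Fin n),
          ((1 : Equiv.Perm (Fin n)), (0 : Fin n → ZMod (2 * n))) = (π, w ∘ ⇑π - w)
        refine ⟨1, Prod.ext rfl ?_⟩
        funext i; simp))
    (by
      rintro p ⟨π, rfl⟩
      show ∃ π'' : Equiv.Perm (Fin n), wInv (π, w ∘ ⇑π - w) = (π'', w ∘ ⇑π'' - w)
      refine ⟨π⁻¹, ?_⟩
      simp only [wInv]
      refine Prod.ext rfl ?_
      funext i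
      simp [Equiv.apply_symm_apply])

lemma coe_Hsub (w : Fin n → ZMod (2 * n)) :
    ((Hsub n w : @Subgroup (Wr n) (wrGroup n)) : Set (Wr n))
      = {p : Wr n | ∃ π : Equiv.Perm (Fin n), p = (π, w ∘ ⇑π - w)} := rfl

lemma rightQuotient_subgroup {G : Type*} [Group G] (K : Subgroup G) :
    rightQuotient (K : Set G) = K := by
  ext g
  constructor
  · rintro ⟨s₁, h₁, s₂, h₂, rfl⟩
    exact mul_mem h₁ (inv_mem h₂)
  · intro hg
    exact ⟨g, hg, 1, K.one_mem, by simp⟩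

lemma hset_zero :
    ((Hsub n 0 : @Subgroup (Wr n) (wrGroup n)) : Set (Wr n))
      = {p : Wr n | ∃ π : Equiv.Perm (Fin n), p = (π, 0)} := by
  have h0 : ∀ π : Equiv.Perm (Fin n), ((0 : Fin n → ZMod (2 * n)) ∘ ⇑π - 0) = 0 := by
    intro π; funext i; simp
  rw [coe_Hsub]
  ext p
  constructor
  · rintro ⟨π, rfl⟩
    exact ⟨π, by rw [h0]⟩
  · rintro ⟨π, rfl⟩
    exact ⟨π, by rw [h0]⟩

lemma perm_fix (n : ℕ) (σ τ : Equiv.Perm (Fin n))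
    (h : ∀ i : Fin n, (σ i : ℕ) + (i : ℕ) = 2 * (τ i : ℕ)) :
    σ = 1 ∧ τ = 1 := by
  have key : ∀ m : ℕ, ∀ j : Fin n, n - 1 - (j : ℕ) = m → τ j = j ∧ σ j = j := by
    intro m
    induction m using Nat.strong_induction_on with
    | _ m IH =>
      intro j hj
      have IH' : ∀ j' : Fin n, (j : ℕ) < (j' : ℕ) → τ j' = j' ∧ σ j' = j' := by
        intro j' hlt
        have h2 := j'.isLt
        exact IH (n - 1 - (j' : ℕ)) (by omega) j' rfl
      have hti : τ (τ⁻¹ j) = j := Equiv.apply_symm_apply τ j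
      set i := τ⁻¹ j with hidef
      have hile : (i : ℕ) ≤ (j : ℕ) := by
        by_contra hc
        push_neg at hc
        have h1 := (IH' i hc).1
        rw [h1] at hti
        have := congrArg Fin.val hti
        omega
      have hsle : (σ i : ℕ) ≤ (j : ℕ) := by
        by_contra hc
        push_neg at hc
        have h2 := (IH' (σ i) hc).2
        have h3 : σ i = i := σ.injective h2
        rw [h3] at hc
        omega
      have heq := h i
      rw [hti] at heq
      have hij : (i : ℕ) = (j : ℕ) := by omega
      have hsij : (σ i : ℕ) = (j : ℕ) := by omega
      have hij : i = j := Fin.ext hij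
      rw [hij] at hti hsij
      exact ⟨hti, Fin.ext hsij⟩
  constructor
  · exact Equiv.ext fun j => by simpa using (key (n - 1 - (j : ℕ)) j rfl).2
  · exact Equiv.ext fun j => by simpa using (key (n - 1 - (j : ℕ)) j rfl).1

lemma step (n : ℕ) (π₂ π₃ : Equiv.Perm (Fin n))
    (hv : (wu n ∘ ⇑π₂ - wu n) ∘ ⇑π₃ + (wv n ∘ ⇑π₃ - wv n) = 0) :
    ∀ i : Fin n, (((π₂ * π₃ : Equiv.Perm (Fin n)) i : ℕ)) + (i : ℕ) = 2 * ((π₃ i : ℕ)) := by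
  intro i
  have hvi := congrFun hv i
  simp only [Pi.add_apply, Pi.sub_apply, Function.comp_apply, Pi.zero_apply] at hvi
  have h1 : ((π₂ (π₃ i) : ℕ)) < n := (π₂ (π₃ i)).isLt
  have h2 : ((π₃ i : ℕ)) < n := (π₃ i).isLt
  have h3 : ((i : ℕ)) < n := i.isLt
  have hz : (((((π₂ (π₃ i) : Fin n) : ℕ) : ℤ) + ((i : ℕ) : ℤ)
      - 2 * (((π₃ i : Fin n) : ℕ) : ℤ) : ℤ) : ZMod (2 * n)) = 0 := by
    unfold wu wv at hvi
    push_cast [Nat.cast_sub h2.le, Nat.cast_sub h3.le] at hvi ⊢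
    linear_combination hvi
  rw [ZMod.intCast_zmod_eq_zero_iff_dvd] at hz
  have h0 : ((((π₂ (π₃ i) : Fin n) : ℕ) : ℤ) + ((i : ℕ) : ℤ)
      - 2 * (((π₃ i : Fin n) : ℕ) : ℤ) : ℤ) = 0 := by
    refine Int.eq_zero_of_abs_lt_dvd hz ?_
    rw [abs_lt]
    push_cast
    omega
  rw [Equiv.Perm.mul_apply]
  omega

lemma tpp_main (n : ℕ) :
    @TPP (Wr n) (wrGroup n)
      {p : Wr n | ∃ π : Equiv.Perm (Fin n), p = (π, 0)}
      {p : Wr n | ∃ π : Equiv.Perm (Fin n), p = (π, wu n ∘ ⇑π - wu n)}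
      {p : Wr n | ∃ π : Equiv.Perm (Fin n), p = (π, wv n ∘ ⇑π - wv n)} := by
  letI := wrGroup n
  intro q₁ hq₁ q₂ hq₂ q₃ hq₃ hprod
  rw [← hset_zero, rightQuotient_subgroup, hset_zero] at hq₁
  rw [← coe_Hsub (wu n), rightQuotient_subgroup, coe_Hsub] at hq₂
  rw [← coe_Hsub (wv n), rightQuotient_subgroup, coe_Hsub] at hq₃
  obtain ⟨π₁, rfl⟩ := hq₁
  obtain ⟨π₂, rfl⟩ := hq₂
  obtain ⟨π₃, rfl⟩ := hq₃
  have h' : wMul (wMul (π₁, (0 : Fin n → ZMod (2 * n))) (π₂, wu n ∘ ⇑π₂ - wu n))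
      (π₃, wv n ∘ ⇑π₃ - wv n)
      = ((1 : Equiv.Perm (Fin n)), (0 : Fin n → ZMod (2 * n))) := hprod
  simp only [wMul, Prod.mk.injEq, Pi.zero_comp, zero_add] at h'
  obtain ⟨hperm, hvec⟩ := h'
  obtain ⟨hσ, hτ⟩ := perm_fix n (π₂ * π₃) π₃ (step n π₂ π₃ hvec)
  have hπ₂ : π₂ = 1 := by
    have := hσ
    rw [hτ, mul_one] at this
    exact this
  have hπ₁ : π₁ = 1 := by
    rw [hπ₂, hτ, mul_one, mul_one] at hperm
    exact hperm
  subst hπ₁ hπ₂ hτ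
  have hu0 : wu n ∘ ⇑(1 : Equiv.Perm (Fin n)) - wu n = 0 := by
    funext i; simp
  have hv0 : wv n ∘ ⇑(1 : Equiv.Perm (Fin n)) - wv n = 0 := by
    funext i; simp
  refine ⟨rfl, ?_, ?_⟩
  · rw [hu0]; rfl
  · rw [hv0]; rfl

end Aux

theorem stmt_14 (n : ℕ) (hn : 1 ≤ n) :
    Nat.card (Wr n) = Nat.factorial n * (2 * n) ^ n ∧
    {p : Wr n | ∃ π : Equiv.Perm (Fin n), p = (π, 0)}.ncard = Nat.factorial n ∧
    {p : Wr n | ∃ π : Equiv.Perm (Fin n), p = (π, wu n ∘ ⇑π - wu n)}.ncard = Nat.factorial n ∧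
    {p : Wr n | ∃ π : Equiv.Perm (Fin n), p = (π, wv n ∘ ⇑π - wv n)}.ncard = Nat.factorial n ∧
    (∃ K₁ K₂ K₃ : @Subgroup (Wr n) (wrGroup n),
      (K₁ : Set (Wr n)) = {p : Wr n | ∃ π : Equiv.Perm (Fin n), p = (π, 0)} ∧
      (K₂ : Set (Wr n)) = {p : Wr n | ∃ π : Equiv.Perm (Fin n), p = (π, wu n ∘ ⇑π - wu n)} ∧
      (K₃ : Set (Wr n)) = {p : Wr n | ∃ π : Equiv.Perm (Fin n), p = (π, wv n ∘ ⇑π - wv n)}) ∧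
    @TPP (Wr n) (wrGroup n)
      {p : Wr n | ∃ π : Equiv.Perm (Fin n), p = (π, 0)}
      {p : Wr n | ∃ π : Equiv.Perm (Fin n), p = (π, wu n ∘ ⇑π - wu n)}
      {p : Wr n | ∃ π : Equiv.Perm (Fin n), p = (π, wv n ∘ ⇑π - wv n)} ∧
    @Realizes (Wr n) (wrGroup n) (Nat.factorial n) (Nat.factorial n) (Nat.factorial n) := by
  haveI : NeZero (2 * n) := ⟨by omega⟩
  have hcard : Nat.card (Wr n) = Nat.factorial n * (2 * n) ^ n := by
    rw [Nat.card_eq_fintype_card]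
    simp [Fintype.card_perm, Fintype.card_fun, ZMod.card]
  have hn1 : {p : Wr n | ∃ π : Equiv.Perm (Fin n), p = (π, 0)}.ncard = Nat.factorial n :=
    hset_ncard (fun _ => 0)
  have hn2 := hset_ncard (fun π : Equiv.Perm (Fin n) => wu n ∘ ⇑π - wu n)
  have hn3 := hset_ncard (fun π : Equiv.Perm (Fin n) => wv n ∘ ⇑π - wv n)
  refine ⟨hcard, hn1, hn2, hn3, ⟨Hsub n 0, Hsub n (wu n), Hsub n (wv n),
    hset_zero, rfl, rfl⟩, tpp_main n, ?_⟩
  exact ⟨_, _, _, Set.toFinite _, Set.toFinite _, Set.toFinite _, hn1, hn2, hn3, tpp_main n⟩
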